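/- For each κ let P_κ denote the orthogonal projection (with respect to the Frobenius inner product) of the n-qubit operator space onto B_κ, the span of products of κ distinct Jordan–Wigner Majorana operators. Then for all computational basis states, the module weights coincide: for all x, y : Fin n → Bool and all κ with 0 ≤ κ ≤ 2n, ‖P_κ(ρ_x)‖ = ‖P_κ(ρ_y)‖, where ρ_x = |x⟩⟨x| and ρ_y = |y⟩⟨y|. -/

import Mathlib

open Matrix

noncomputable section

/-- The 2×2 Pauli matrix `X`. -/
def σX : Matrix (Fin 2) (Fin 2) ℂ := !![0, 1; 1, 0]

/-- The 2×2 Pauli matrix `Y`. -/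
def σY : Matrix (Fin 2) (Fin 2) ℂ := !![0, -Complex.I; Complex.I, 0]

/-- The 2×2 Pauli matrix `Z`. -/
def σZ : Matrix (Fin 2) (Fin 2) ℂ := !![1, 0; 0, -1]

/-- The Kronecker product `P 0 ⊗ P 1 ⊗ ⋯ ⊗ P (n-1)` of `n` 2×2 complex matrices,
realized as a `2^n × 2^n` matrix; rows and columns are indexed by `Fin (2^n)`
via the equivalence `finFunctionFinEquiv : (Fin n → Fin 2) ≃ Fin (2^n)`, and the
entries are the products of the entries of the factors. -/
def pauliString (n : ℕ) (P : Fin n → Matrix (Fin 2) (Fin 2) ℂ) :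
    Matrix (Fin (2 ^ n)) (Fin (2 ^ n)) ℂ :=
  Matrix.of fun i j =>
    ∏ k : Fin n, P k ((finFunctionFinEquiv.symm i : Fin n → Fin 2) k)
      ((finFunctionFinEquiv.symm j : Fin n → Fin 2) k)

/-- The Jordan–Wigner Majorana operators on `n` qubits (with sites and Majorana
indices 0-indexed): for `a = 2μ` this is `Z^{⊗μ} ⊗ X ⊗ I^{⊗(n-μ-1)}` and for
`a = 2μ+1` it is `Z^{⊗μ} ⊗ Y ⊗ I^{⊗(n-μ-1)}`. -/
def majorana (n : ℕ) (a : Fin (2 * n)) : Matrix (Fin (2 ^ n)) (Fin (2 ^ n)) ℂ :=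
  pauliString n fun k =>
    if (k : ℕ) < (a : ℕ) / 2 then σZ
    else if (k : ℕ) = (a : ℕ) / 2 then (if (a : ℕ) % 2 = 0 then σX else σY)
    else 1

/-- `c_S`: the product of the Majorana operators `c_a` for `a ∈ S`, taken in
increasing order of the index `a`. -/
def majoranaProd (n : ℕ) (S : Finset (Fin (2 * n))) :
    Matrix (Fin (2 ^ n)) (Fin (2 ^ n)) ℂ :=
  ((S.sort (· ≤ ·)).map (majorana n)).prod

/-- `B_κ`: the complex linear span of the products of `κ` distinct Jordan–Wigner
Majorana operators. -/
def BMod (n κ : ℕ) : Submodule ℂ (Matrix (Fin (2 ^ n)) (Fin (2 ^ n)) ℂ) :=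
  Submodule.span ℂ (majoranaProd n '' {S : Finset (Fin (2 * n)) | S.card = κ})

/-- The computational basis state `|x⟩` of `n` qubits, as a standard basis
vector of `ℂ^{2^n}`. -/
def ket (n : ℕ) (x : Fin n → Bool) : Fin (2 ^ n) → ℂ :=
  Pi.single (finFunctionFinEquiv fun i => if x i then 1 else 0) 1

/-- The matchgate generators on `n` qubits: the single-qubit operators
`Z_j = I^{⊗j} ⊗ Z ⊗ I^{⊗(n-j-1)}` and the two-qubit operators
`I^{⊗j} ⊗ P ⊗ P' ⊗ I^{⊗(n-j-2)}` with `P, P' ∈ {X, Y}` on adjacent qubits. -/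
def matchgateGens (n : ℕ) : Set (Matrix (Fin (2 ^ n)) (Fin (2 ^ n)) ℂ) :=
  {G | (∃ j : Fin n, G = pauliString n fun k => if k = j then σZ else 1) ∨
    (∃ j : ℕ, j + 1 < n ∧ ∃ P P' : Matrix (Fin 2) (Fin 2) ℂ,
      (P = σX ∨ P = σY) ∧ (P' = σX ∨ P' = σY) ∧
      G = pauliString n fun k =>
        if (k : ℕ) = j then P else if (k : ℕ) = j + 1 then P' else 1)}

/-- The Hilbert–Schmidt (Frobenius) norm of a matrix, induced by the inner
product `⟨A, B⟩ = Tr(Aᴴ B)`. -/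
def hsNorm {N : ℕ} (A : Matrix (Fin N) (Fin N) ℂ) : ℝ :=
  Real.sqrt ((Aᴴ * A).trace.re)

/-- `P` is the orthogonal projection onto the subspace `B` of the operator space,
with respect to the Frobenius inner product `⟨A, C⟩ = Tr(Aᴴ C)`: every value of `P`
lies in `B`, and `A - P A` is orthogonal to `B`. -/
def IsHSOrthogonalProjection {N : ℕ} (B : Submodule ℂ (Matrix (Fin N) (Fin N) ℂ))
    (P : Matrix (Fin N) (Fin N) ℂ →ₗ[ℂ] Matrix (Fin N) (Fin N) ℂ) : Prop :=
  (∀ A, P A ∈ B) ∧ ∀ A, ∀ C ∈ B, ((A - P A)ᴴ * C).trace = 0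

namespace JWProof

lemma pauliString_mul (n : ℕ) (P Q : Fin n → Matrix (Fin 2) (Fin 2) ℂ) :
    pauliString n P * pauliString n Q = pauliString n (fun k => P k * Q k) := by
  ext i j
  simp only [pauliString, Matrix.mul_apply, Matrix.of_apply]
  rw [← Equiv.sum_comp finFunctionFinEquiv
    (fun l => (∏ k, P k (finFunctionFinEquiv.symm i k) (finFunctionFinEquiv.symm l k)) *
      ∏ k, Q k (finFunctionFinEquiv.symm l k) (finFunctionFinEquiv.symm j k))]
  simp only [Equiv.symm_apply_apply]
  rw [Fintype.sum_congr _ _ (fun g => (Finset.prod_mul_distrib).symm)]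
  exact (Fintype.prod_sum (fun k v => P k (finFunctionFinEquiv.symm i k) v * Q k v (finFunctionFinEquiv.symm j k))).symm

lemma pauliString_smul (n : ℕ) (s : Fin n → ℂ) (P : Fin n → Matrix (Fin 2) (Fin 2) ℂ) :
    pauliString n (fun k => s k • P k) = (∏ k, s k) • pauliString n P := by
  ext i j
  simp [pauliString, Finset.prod_mul_distrib, mul_comm]

lemma pauliString_one (n : ℕ) : pauliString n (fun _ => 1) = 1 := by
  ext i j
  simp only [pauliString, Matrix.of_apply, Matrix.one_apply]
  by_cases h : i = j
  · subst h; simp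
  · have : ∃ k, (finFunctionFinEquiv.symm i : Fin n → Fin 2) k ≠ finFunctionFinEquiv.symm j k := by
      by_contra hc
      push_neg at hc
      exact h (finFunctionFinEquiv.symm.injective (funext hc))
    obtain ⟨k, hk⟩ := this
    rw [if_neg h]
    exact Finset.prod_eq_zero (Finset.mem_univ k) (by simp [Matrix.one_apply, hk])

lemma pauliString_conjTranspose (n : ℕ) (P : Fin n → Matrix (Fin 2) (Fin 2) ℂ) :
    (pauliString n P)ᴴ = pauliString n (fun k => (P k)ᴴ) := by
  ext i j
  simp [pauliString, Matrix.conjTranspose_apply, map_prod]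

lemma sqX : σX * σX = 1 := by
  ext i j; fin_cases i <;> fin_cases j <;>
    simp [σX, Matrix.mul_apply, Fin.sum_univ_two]
lemma sqY : σY * σY = 1 := by
  ext i j; fin_cases i <;> fin_cases j <;>
    simp [σY, Matrix.mul_apply, Fin.sum_univ_two, Complex.I_mul_I]
lemma sqZ : σZ * σZ = 1 := by
  ext i j; fin_cases i <;> fin_cases j <;>
    simp [σZ, Matrix.mul_apply, Fin.sum_univ_two]
lemma hermX : σXᴴ = σX := by
  ext i j; fin_cases i <;> fin_cases j <;> simp [σX, Matrix.conjTranspose_apply]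
lemma hermY : σYᴴ = σY := by
  ext i j; fin_cases i <;> fin_cases j <;> simp [σY, Matrix.conjTranspose_apply]
lemma hermZ : σZᴴ = σZ := by
  ext i j; fin_cases i <;> fin_cases j <;> simp [σZ, Matrix.conjTranspose_apply]
lemma acXZ : σX * σZ = (-1 : ℂ) • (σZ * σX) := by
  ext i j; fin_cases i <;> fin_cases j <;>
    simp [σX, σZ, Matrix.mul_apply, Fin.sum_univ_two]
lemma acYZ : σY * σZ = (-1 : ℂ) • (σZ * σY) := by
  ext i j; fin_cases i <;> fin_cases j <;>
    simp [σY, σZ, Matrix.mul_apply, Fin.sum_univ_two]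
lemma acXY : σX * σY = (-1 : ℂ) • (σY * σX) := by
  ext i j; fin_cases i <;> fin_cases j <;>
    simp [σX, σY, Matrix.mul_apply, Fin.sum_univ_two]

lemma congrPauliString {n : ℕ} {P Q : Fin n → Matrix (Fin 2) (Fin 2) ℂ}
    (h : ∀ k, P k = Q k) : pauliString n P = pauliString n Q := by
  have := funext h; subst this; rfl

lemma majorana_sq (n : ℕ) (a : Fin (2 * n)) : majorana n a * majorana n a = 1 := by
  rw [majorana, pauliString_mul, ← pauliString_one n]
  apply congrPauliString
  intro k
  by_cases h1 : (k : ℕ) < (a : ℕ) / 2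
  · simp [h1, sqZ]
  · by_cases h2 : (k : ℕ) = (a : ℕ) / 2
    · rcases Nat.mod_two_eq_zero_or_one (a : ℕ) with h | h <;> simp [h1, h2, h, sqX, sqY]
    · simp [h1, h2]

lemma majorana_herm (n : ℕ) (a : Fin (2 * n)) : (majorana n a)ᴴ = majorana n a := by
  rw [majorana, pauliString_conjTranspose]
  apply congrPauliString
  intro k
  by_cases h1 : (k : ℕ) < (a : ℕ) / 2
  · simp [h1, hermZ]
  · by_cases h2 : (k : ℕ) = (a : ℕ) / 2
    · rcases Nat.mod_two_eq_zero_or_one (a : ℕ) with h | h <;> simp [h1, h2, h, hermX, hermY]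
    · simp [h1, h2]

lemma majorana_anticomm_aux (n : ℕ) (a b : Fin (2 * n)) (hab : (a : ℕ) < (b : ℕ)) :
    majorana n a * majorana n b = (-1 : ℂ) • (majorana n b * majorana n a) := by
  have hdiv : (a : ℕ) / 2 ≤ (b : ℕ) / 2 := Nat.div_le_div_right hab.le
  have hμn : (a : ℕ) / 2 < n := by omega
  rw [majorana, majorana, pauliString_mul, pauliString_mul]
  have key : ∀ k : Fin n,
      ((if (k : ℕ) < (a : ℕ) / 2 then σZ
        else if (k : ℕ) = (a : ℕ) / 2 then (if (a : ℕ) % 2 = 0 then σX else σY) else 1) *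
       (if (k : ℕ) < (b : ℕ) / 2 then σZ
        else if (k : ℕ) = (b : ℕ) / 2 then (if (b : ℕ) % 2 = 0 then σX else σY) else 1))
      = (if (k : ℕ) = (a : ℕ) / 2 then (-1 : ℂ) else 1) •
        ((if (k : ℕ) < (b : ℕ) / 2 then σZ
          else if (k : ℕ) = (b : ℕ) / 2 then (if (b : ℕ) % 2 = 0 then σX else σY) else 1) *
         (if (k : ℕ) < (a : ℕ) / 2 then σZ
          else if (k : ℕ) = (a : ℕ) / 2 then (if (a : ℕ) % 2 = 0 then σX else σY) else 1)) := by
    intro k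
    rcases lt_trichotomy (k : ℕ) ((a : ℕ) / 2) with hk | hk | hk
    · have : (k : ℕ) ≠ (a : ℕ) / 2 := hk.ne
      have hkb : (k : ℕ) < (b : ℕ) / 2 := lt_of_lt_of_le hk hdiv
      simp [hk, hkb, this]
    · rcases eq_or_lt_of_le hdiv with he | hlt
      · have ha2 : (a : ℕ) % 2 = 0 := by omega
        have hb2 : (b : ℕ) % 2 = 1 := by omega
        have h1 : ¬ (k : ℕ) < (a : ℕ) / 2 := by omega
        have h1b : ¬ (k : ℕ) < (b : ℕ) / 2 := by omega
        have h2b : (k : ℕ) = (b : ℕ) / 2 := by omega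
        have hnl : ¬ (a : ℕ) / 2 < (b : ℕ) / 2 := by omega
        simp [h1, h1b, hk, h2b, ha2, hb2, acXY, hnl, he]
      · have hkb : (k : ℕ) < (b : ℕ) / 2 := hk ▸ hlt
        have h1 : ¬ (k : ℕ) < (a : ℕ) / 2 := by omega
        rcases Nat.mod_two_eq_zero_or_one (a : ℕ) with h | h <;>
          simp [hk, hkb, h1, h, acXZ, acYZ, hlt]
    · have h1 : ¬ (k : ℕ) < (a : ℕ) / 2 := by omega
      have h2 : (k : ℕ) ≠ (a : ℕ) / 2 := hk.ne'
      simp [h1, h2]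
  rw [congrPauliString (fun k => key k), pauliString_smul]
  congr 1
  have : ∀ k : Fin n, (if (k : ℕ) = (a : ℕ) / 2 then (-1 : ℂ) else 1)
      = (if k = (⟨(a : ℕ) / 2, hμn⟩ : Fin n) then (-1 : ℂ) else 1) := by
    intro k; simp [Fin.ext_iff]
  rw [Fintype.prod_congr _ _ this, Fintype.prod_ite_eq']

lemma majorana_anticomm (n : ℕ) (a b : Fin (2 * n)) (hab : a ≠ b) :
    majorana n a * majorana n b = (-1 : ℂ) • (majorana n b * majorana n a) := by
  rcases lt_or_gt_of_ne (fun h => hab (Fin.ext h)) with h | h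
  · exact majorana_anticomm_aux n a b h
  · rw [majorana_anticomm_aux n b a h, smul_smul]; norm_num
lemma majorana_comm_list (n : ℕ) (a : Fin (2 * n)) (L : List (Fin (2 * n))) :
    ∃ ε : ℂ, (ε = 1 ∨ ε = -1) ∧
      majorana n a * (L.map (majorana n)).prod
        = ε • ((L.map (majorana n)).prod * majorana n a) := by
  induction L with
  | nil => exact ⟨1, Or.inl rfl, by simp⟩
  | cons b L ih =>
    obtain ⟨ε, hε, hcomm⟩ := ih
    refine ⟨(if a = b then 1 else -1) * ε, ?_, ?_⟩
    · rcases hε with h | h <;> by_cases hab : a = b <;> simp [h, hab]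
    · by_cases hab : a = b
      · subst hab
        simp only [List.map_cons, List.prod_cons, if_pos rfl, one_mul]
        conv_lhs => rw [hcomm, mul_smul_comm]
        simp [mul_assoc]
      · simp only [List.map_cons, List.prod_cons, if_neg hab]
        rw [← mul_assoc, majorana_anticomm n a b hab, smul_mul_assoc, mul_assoc, hcomm,
          mul_smul_comm, smul_smul, mul_assoc]

lemma conj_majoranaProd (n : ℕ) (a : Fin (2 * n)) (S : Finset (Fin (2 * n))) :
    ∃ ε : ℂ, (ε = 1 ∨ ε = -1) ∧
      majorana n a * majoranaProd n S * majorana n a = ε • majoranaProd n S := by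
  obtain ⟨ε, hε, h⟩ := majorana_comm_list n a (S.sort (· ≤ ·))
  refine ⟨ε, hε, ?_⟩
  rw [majoranaProd, h, smul_mul_assoc, mul_assoc, majorana_sq, mul_one]

lemma conj_mem_BMod (n κ : ℕ) (a : Fin (2 * n))
    {M : Matrix (Fin (2 ^ n)) (Fin (2 ^ n)) ℂ} (hM : M ∈ BMod n κ) :
    majorana n a * M * majorana n a ∈ BMod n κ := by
  induction hM using Submodule.span_induction with
  | mem x hx =>
    obtain ⟨S, hS, rfl⟩ := hx
    obtain ⟨ε, _, h⟩ := conj_majoranaProd n a S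
    rw [h]
    exact Submodule.smul_mem _ _ (Submodule.subset_span ⟨S, hS, rfl⟩)
  | zero => simp [BMod]
  | add x y _ _ hx hy => rw [mul_add, add_mul]; exact add_mem hx hy
  | smul c x _ hx => rw [mul_smul_comm, smul_mul_assoc]; exact Submodule.smul_mem _ _ hx

lemma conj_inner {N : ℕ} (c M C : Matrix (Fin N) (Fin N) ℂ) (hc : cᴴ = c) :
    ((c * M * c)ᴴ * C).trace = (Mᴴ * (c * C * c)).trace := by
  have h1 : (c * M * c)ᴴ * C = c * (Mᴴ * (c * C)) := by
    rw [conjTranspose_mul, conjTranspose_mul, hc]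
    noncomm_ring
  rw [h1, Matrix.trace_mul_comm c, mul_assoc]

lemma hsNorm_conj {N : ℕ} (c M : Matrix (Fin N) (Fin N) ℂ) (hc : cᴴ = c)
    (hc2 : c * c = 1) : hsNorm (c * M * c) = hsNorm M := by
  unfold hsNorm
  congr 2
  rw [conj_inner _ _ _ hc]
  congr 1
  have : c * (c * M * c) * c = (c * c) * M * (c * c) := by noncomm_ring
  rw [this, hc2, one_mul, mul_one]

lemma trace_self_zero {N : ℕ} (M : Matrix (Fin N) (Fin N) ℂ)
    (h : (Mᴴ * M).trace = 0) : M = 0 := by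
  have ht : (Mᴴ * M).trace = ((∑ i, ∑ j, Complex.normSq (M j i) : ℝ) : ℂ) := by
    simp only [Matrix.trace, Matrix.diag, Matrix.mul_apply, Matrix.conjTranspose_apply]
    push_cast
    congr 1
    ext i
    congr 1
    ext j
    rw [Complex.normSq_eq_conj_mul_self]
    rfl
  rw [ht, Complex.ofReal_eq_zero] at h
  have hz : ∀ i j, Complex.normSq (M j i) = 0 := by
    intro i j
    have h1 := (Finset.sum_eq_zero_iff_of_nonneg (fun i _ =>
      Finset.sum_nonneg (fun j _ => Complex.normSq_nonneg (M j i)))).mp h i (Finset.mem_univ i)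
    exact (Finset.sum_eq_zero_iff_of_nonneg (fun j _ =>
      Complex.normSq_nonneg (M j i))).mp h1 j (Finset.mem_univ j)
  ext i j
  simpa using Complex.normSq_eq_zero.mp (hz j i)

lemma proj_eq {N : ℕ} {B : Submodule ℂ (Matrix (Fin N) (Fin N) ℂ)}
    {A b1 b2 : Matrix (Fin N) (Fin N) ℂ} (h1 : b1 ∈ B) (h2 : b2 ∈ B)
    (o1 : ∀ C ∈ B, ((A - b1)ᴴ * C).trace = 0)
    (o2 : ∀ C ∈ B, ((A - b2)ᴴ * C).trace = 0) : b1 = b2 := by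
  have hm : b1 - b2 ∈ B := sub_mem h1 h2
  have e1 := o1 _ hm
  have e2 := o2 _ hm
  have key : ((b1 - b2)ᴴ * (b1 - b2)).trace = 0 := by
    have hdiff : (b1 - b2)ᴴ = (A - b2)ᴴ - (A - b1)ᴴ := by
      have h' : A - b2 - (A - b1) = b1 - b2 := by abel
      rw [← Matrix.conjTranspose_sub, h']
    rw [hdiff, Matrix.sub_mul, Matrix.trace_sub, e1, e2, sub_zero]
  have := trace_self_zero _ key
  exact sub_eq_zero.mp this

lemma P_conj (n κ : ℕ)
    (P : Matrix (Fin (2 ^ n)) (Fin (2 ^ n)) ℂ →ₗ[ℂ] Matrix (Fin (2 ^ n)) (Fin (2 ^ n)) ℂ)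
    (hP : IsHSOrthogonalProjection (BMod n κ) P) (a : Fin (2 * n))
    (A : Matrix (Fin (2 ^ n)) (Fin (2 ^ n)) ℂ) :
    P (majorana n a * A * majorana n a) = majorana n a * (P A) * majorana n a := by
  set c := majorana n a with hcdef
  have hc : cᴴ = c := majorana_herm n a
  have hc2 : c * c = 1 := majorana_sq n a
  refine proj_eq (hP.1 _) (conj_mem_BMod n κ a (hP.1 A)) (hP.2 _) ?_
  intro C hC
  have hsub : c * A * c - c * (P A) * c = c * (A - P A) * c := by noncomm_ring
  rw [hsub, conj_inner _ _ _ hc]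
  exact hP.2 A _ (conj_mem_BMod n κ a hC)
lemma mul_vecMulVec_mul {N : ℕ} (A B : Matrix (Fin N) (Fin N) ℂ) (u v : Fin N → ℂ) :
    A * vecMulVec u v * B = vecMulVec (A *ᵥ u) (v ᵥ* B) := by
  ext i j
  simp only [Matrix.mul_apply, vecMulVec_apply, Matrix.mulVec, Matrix.vecMul,
    dotProduct, Finset.sum_mul, Finset.mul_sum]
  exact Finset.sum_congr rfl fun m _ => Finset.sum_congr rfl fun l _ => by ring

lemma vecMulVec_smul_smul {N : ℕ} (a b : ℂ) (u v : Fin N → ℂ) :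
    vecMulVec (a • u) (b • v) = (a * b) • vecMulVec u v := by
  ext i j
  simp [vecMulVec_apply]
  ring

lemma sigmaZ_diag (b : Bool) :
    σZ (if b then 1 else 0) (if b then 1 else 0) = if b then -1 else 1 := by
  cases b <;> simp [σZ]

lemma sigmaZ_offdiag {u v : Fin 2} (h : u ≠ v) : σZ u v = 0 := by
  fin_cases u <;> fin_cases v <;> simp_all [σZ]

lemma sigmaX_diag (u : Fin 2) : σX u u = 0 := by
  fin_cases u <;> simp [σX]

lemma sigmaX_offdiag {u v : Fin 2} (h : u ≠ v) : σX u v = 1 := by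
  fin_cases u <;> fin_cases v <;> simp_all [σX]

lemma one_offdiag {u v : Fin 2} (h : u ≠ v) : (1 : Matrix (Fin 2) (Fin 2) ℂ) u v = 0 := by
  simp [Matrix.one_apply, h]

/-- The even-index Majorana `c_{2μ}` acts on a computational basis ket by flipping
bit `μ`, up to a sign. -/
lemma majorana_mulVec_ket (n : ℕ) (μ : Fin n) (x : Fin n → Bool) :
    ∃ ε : ℂ, (ε = 1 ∨ ε = -1) ∧
      majorana n ⟨2 * μ, by omega⟩ *ᵥ ket n x
        = ε • ket n (fun i => if i = μ then !(x i) else x i) := by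
  set x' : Fin n → Bool := fun i => if i = μ then !(x i) else x i with hx'
  set g : Fin n → Fin 2 := fun i => if x i then 1 else 0 with hg
  set g' : Fin n → Fin 2 := fun i => if x' i then 1 else 0 with hg'
  set ε : ℂ := ∏ k : Fin n, (if (k : ℕ) < (μ : ℕ) then (if x k then (-1 : ℂ) else 1) else 1)
    with hε
  have hεpm : ε = 1 ∨ ε = -1 := by
    rw [hε]
    refine Finset.prod_induction _ (fun z => z = 1 ∨ z = -1) ?_ (Or.inl rfl) ?_
    · rintro u v (hu | hu) (hv | hv) <;> simp [hu, hv]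
    · intro k _
      by_cases h1 : (k : ℕ) < (μ : ℕ) <;> by_cases h2 : x k <;> simp [h1, h2]
  refine ⟨ε, hεpm, ?_⟩
  have hPa : majorana n ⟨2 * μ, by omega⟩
      = pauliString n (fun k => if (k : ℕ) < (μ : ℕ) then σZ
          else if (k : ℕ) = (μ : ℕ) then σX else 1) := by
    rw [majorana]
    apply congrPauliString
    intro k
    have h2 : (2 * (μ : ℕ)) / 2 = (μ : ℕ) := by omega
    have h3 : (2 * (μ : ℕ)) % 2 = 0 := by omega
    simp [h2, h3]
  have hket : ket n x = Pi.single (finFunctionFinEquiv g) 1 := rfl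
  have hket' : ket n x' = Pi.single (finFunctionFinEquiv g') 1 := rfl
  funext i
  rw [hket, Matrix.mulVec_single_one, hPa]
  have hsymm : ∀ h : Fin n → Fin 2,
      (finFunctionFinEquiv.symm (finFunctionFinEquiv h) : Fin n → Fin 2) = h :=
    fun h => Equiv.symm_apply_apply _ _
  by_cases hi : i = finFunctionFinEquiv g'
  · subst hi
    simp only [pauliString, Matrix.col_apply, Matrix.of_apply, hsymm, mul_one]
    have hval : ∀ k : Fin n,
        (if (k : ℕ) < (μ : ℕ) then σZ else if (k : ℕ) = (μ : ℕ) then σX else 1) (g' k) (g k)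
          = (if (k : ℕ) < (μ : ℕ) then (if x k then (-1 : ℂ) else 1) else 1) := by
      intro k
      rcases lt_trichotomy (k : ℕ) ((μ : ℕ)) with hk | hk | hk
      · have hkne : k ≠ μ := by intro h; subst h; omega
        have : g' k = g k := by simp [hg', hg, hx', hkne]
        rw [if_pos hk, if_pos hk, this, hg]
        simp only
        exact sigmaZ_diag (x k)
      · have hkeq : k = μ := Fin.ext hk
        subst hkeq
        have hne : g' k ≠ g k := by
          simp only [hg', hg, hx', if_pos rfl]
          cases x k <;> simp
        rw [if_neg (by omega), if_pos hk, if_neg (by omega)]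
        exact sigmaX_offdiag hne
      · have h1 : ¬ (k : ℕ) < (μ : ℕ) := by omega
        have h2 : (k : ℕ) ≠ (μ : ℕ) := by omega
        have hkne : k ≠ μ := by intro h; subst h; omega
        have : g' k = g k := by simp [hg', hg, hx', hkne]
        rw [if_neg h1, if_neg h2, if_neg h1, this]
        simp [Matrix.one_apply]
    rw [Fintype.prod_congr _ _ hval, ← hε, hket']
    simp
  · simp only [pauliString, Matrix.col_apply, Matrix.of_apply, hsymm, mul_one]
    have : ∃ k, (finFunctionFinEquiv.symm i : Fin n → Fin 2) k ≠ g' k := by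
      by_contra hc
      push_neg at hc
      apply hi
      have : (finFunctionFinEquiv.symm i : Fin n → Fin 2) = g' := funext hc
      rw [← this, Equiv.apply_symm_apply]
    obtain ⟨k, hk⟩ := this
    set f : Fin n → Fin 2 := (finFunctionFinEquiv.symm i : Fin n → Fin 2) with hf
    have hzero : (if (k : ℕ) < (μ : ℕ) then σZ else if (k : ℕ) = (μ : ℕ) then σX else 1)
        (f k) (g k) = 0 := by
      rcases lt_trichotomy (k : ℕ) ((μ : ℕ)) with hlt | heq | hgt
      · have hkne : k ≠ μ := by intro h; subst h; omega
        have hgg : g' k = g k := by simp [hg', hg, hx', hkne]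
        rw [if_pos hlt]
        exact sigmaZ_offdiag (hgg ▸ hk)
      · have hkeq : k = μ := Fin.ext heq
        have hne : g' k ≠ g k := by
          subst hkeq
          simp only [hg', hg, hx', if_pos rfl]
          cases x k <;> simp
        have : f k = g k := by
          have h2 : ∀ u v w : Fin 2, u ≠ v → v ≠ w → u = w := by decide
          exact h2 _ _ _ hk (hne)
        rw [if_neg (by omega), if_pos heq, this]
        exact sigmaX_diag _
      · have hkne : k ≠ μ := by intro h; subst h; omega
        have hgg : g' k = g k := by simp [hg', hg, hx', hkne]
        rw [if_neg (by omega), if_neg (by omega)]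
        exact one_offdiag (hgg ▸ hk)
    rw [Finset.prod_eq_zero (Finset.mem_univ k) hzero, hket']
    have hine : i ≠ finFunctionFinEquiv g' := hi
    simp [Pi.single_apply, hine]
lemma conj_rho (n : ℕ) (μ : Fin n) (x : Fin n → Bool) :
    majorana n ⟨2 * μ, by omega⟩ * vecMulVec (ket n x) (star (ket n x))
        * majorana n ⟨2 * μ, by omega⟩
      = vecMulVec (ket n (fun i => if i = μ then !(x i) else x i))
          (star (ket n (fun i => if i = μ then !(x i) else x i))) := by
  obtain ⟨ε, hε, h⟩ := majorana_mulVec_ket n μ x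
  rw [mul_vecMulVec_mul]
  have hstar : star (ket n x) ᵥ* majorana n (⟨2 * μ, by omega⟩ : Fin (2 * n))
      = star (majorana n (⟨2 * μ, by omega⟩ : Fin (2 * n)) *ᵥ ket n x) := by
    rw [Matrix.star_mulVec, majorana_herm]
  rw [hstar, h, star_smul, vecMulVec_smul_smul]
  have : ε * star ε = 1 := by rcases hε with h' | h' <;> simp [h']
  rw [this, one_smul]

lemma flip_step (n κ : ℕ)
    (P : Matrix (Fin (2 ^ n)) (Fin (2 ^ n)) ℂ →ₗ[ℂ] Matrix (Fin (2 ^ n)) (Fin (2 ^ n)) ℂ)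
    (hP : IsHSOrthogonalProjection (BMod n κ) P) (μ : Fin n) (x : Fin n → Bool) :
    hsNorm (P (vecMulVec (ket n (fun i => if i = μ then !(x i) else x i))
        (star (ket n (fun i => if i = μ then !(x i) else x i)))))
      = hsNorm (P (vecMulVec (ket n x) (star (ket n x)))) := by
  rw [← conj_rho n μ x, P_conj n κ P hP,
    hsNorm_conj _ _ (majorana_herm n _) (majorana_sq n _)]

end JWProof
open JWProof in
theorem computational_basis_module_weights_eq (n : ℕ)
    (P : ℕ → (Matrix (Fin (2 ^ n)) (Fin (2 ^ n)) ℂ →ₗ[ℂ] Matrix (Fin (2 ^ n)) (Fin (2 ^ n)) ℂ))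
    (hP : ∀ κ, IsHSOrthogonalProjection (BMod n κ) (P κ)) :
    ∀ (x y : Fin n → Bool) (κ : ℕ), κ ≤ 2 * n →
      hsNorm (P κ (vecMulVec (ket n x) (star (ket n x)))) =
        hsNorm (P κ (vecMulVec (ket n y) (star (ket n y)))) := by
  intro x y κ _
  suffices main : ∀ (d : ℕ) (x y : Fin n → Bool),
      (Finset.univ.filter (fun i => x i ≠ y i)).card = d →
      hsNorm (P κ (vecMulVec (ket n x) (star (ket n x)))) =
        hsNorm (P κ (vecMulVec (ket n y) (star (ket n y)))) by
    exact main _ x y rfl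
  intro d
  induction d with
  | zero =>
    intro x y hd
    have hxy : x = y := by
      funext i
      by_contra hne
      have : i ∈ Finset.univ.filter (fun i => x i ≠ y i) := by simp [hne]
      rw [Finset.card_eq_zero.mp hd] at this
      exact absurd this (Finset.notMem_empty i)
    rw [hxy]
  | succ d ih =>
    intro x y hd
    have hne : (Finset.univ.filter (fun i => x i ≠ y i)).Nonempty := by
      rw [← Finset.card_pos, hd]; omega
    obtain ⟨μ, hμ⟩ := hne
    have hxyμ : x μ ≠ y μ := by simpa using hμ
    have hflip : (!(x μ)) = y μ := by
      cases hx : x μ <;> cases hy : y μ <;> simp_all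
    set x1 : Fin n → Bool := fun i => if i = μ then !(x i) else x i with hx1
    have hstep := flip_step n κ (P κ) (hP κ) μ x
    have hcard : (Finset.univ.filter (fun i => x1 i ≠ y i)).card = d := by
      have hset : Finset.univ.filter (fun i => x1 i ≠ y i)
          = (Finset.univ.filter (fun i => x i ≠ y i)).erase μ := by
        ext i
        by_cases hiμ : i = μ
        · subst hiμ
          simp [hx1, hflip]
        · simp [hx1, hiμ]
      rw [hset, Finset.card_erase_of_mem hμ, hd]
      omega
    rw [← hstep]
    exact ih x1 y hcard
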